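/- Equivalence of walks on the hexagonal lattice (Theorem 3b): if σ_M(p) = (-1)^{d(p)+1} σ_R(p) for every site p, then the flipping mirror walk on σ_M and the flipping rotator walk on σ_R, both starting at the origin with velocity v_k for k odd (k ∈ {1,3,5}), have identical position sequences for all t ∈ ℕ. -/

import Mathlib

/-- The six unit velocities v_k = (cos(kπ/3), sin(kπ/3)), written in
coordinates with respect to the basis (1,0) and (1/2, √3/2) of the triangular
lattice containing the hexagonal lattice. -/
def hexVel (k : ZMod 6) : ℤ × ℤ :=
  if k = 0 then (1, 0) else if k = 1 then (0, 1) else if k = 2 then (-1, 1)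
  else if k = 3 then (-1, 0) else if k = 4 then (0, -1) else (1, -1)

/-- The mirror scattering rule M on ℍ² (Table 3). -/
def hexM (k : ZMod 6) (σ : ℤ) : ZMod 6 :=
  if σ = 1 then
    (if k = 0 then 5 else if k = 1 then 2 else if k = 2 then 1
     else if k = 3 then 4 else if k = 4 then 3 else 0)
  else
    (if k = 0 then 1 else if k = 1 then 0 else if k = 2 then 3
     else if k = 3 then 2 else if k = 4 then 5 else 4)

/-- The rotator scattering rule R on ℍ²: k ↦ (k - σ) mod 6. -/
def hexR (k : ZMod 6) (σ : ℤ) : ZMod 6 := k - (σ : ZMod 6)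

/-- State of a walk on ℍ²: position (in coordinates of the ambient triangular
lattice), velocity index, environment of scatterers. -/
structure HexState where
  pos : ℤ × ℤ
  vel : ZMod 6
  env : ℤ × ℤ → ℤ

/-- One step of the flipping dynamics with scattering rule `f`. -/
def hexStep (f : ZMod 6 → ℤ → ZMod 6) (s : HexState) : HexState :=
  let k' := f s.vel (s.env s.pos)
  { pos := s.pos + hexVel k', vel := k',
    env := fun q => if q = s.pos then -s.env s.pos else s.env q }

/-- The walk: state after `t` time steps. -/
def hexWalk (f : ZMod 6 → ℤ → ZMod 6) (s₀ : HexState) (t : ℕ) : HexState :=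
  (hexStep f)^[t] s₀

/-- The class of a triangular-lattice point: (x - y) mod 3.  The hexagonal
sublattice visited by a walker consists of two of the three classes. -/
def triClass (p : ℤ × ℤ) : ZMod 3 := ((p.1 - p.2 : ℤ) : ZMod 3)

lemma hexVel_ne_zero : ∀ k : ZMod 6, hexVel k ≠ 0 := by decide

/-- Adjacency of the hexagonal lattice visited by walks with odd-index initial
velocity: sites of class 0 are joined to their three neighbors in the
even-indexed directions (and symmetrically). -/
def hexAdjO (p q : ℤ × ℤ) : Prop :=
  (triClass p = 0 ∧ ∃ k : ZMod 6, Even k.val ∧ q = p + hexVel k) ∨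
  (triClass q = 0 ∧ ∃ k : ZMod 6, Even k.val ∧ p = q + hexVel k)

/-- The hexagonal lattice (for odd-index initial velocities) as a graph. -/
def hexGraphO : SimpleGraph (ℤ × ℤ) where
  Adj := hexAdjO
  symm := ⟨fun p q h => Or.symm h⟩
  loopless := ⟨by
    intro p h
    rcases h with ⟨-, k, -, hk⟩ | ⟨-, k, -, hk⟩ <;>
      exact hexVel_ne_zero k (left_eq_add.mp hk)⟩

/-- Graph distance to the origin in the hexagonal lattice (odd case). -/
noncomputable def hexDistO (p : ℤ × ℤ) : ℕ := hexGraphO.dist 0 p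

-- auxiliary lemmas

lemma triClass_add (p q : ℤ × ℤ) : triClass (p + q) = triClass p + triClass q := by
  simp only [triClass, Prod.fst_add, Prod.snd_add]
  push_cast; ring

lemma triClass_hexVel_even {k : ZMod 6} (h : Even k.val) : triClass (hexVel k) = 1 := by
  revert h; fin_cases k <;> decide

lemma triClass_hexVel_odd {k : ZMod 6} (h : Odd k.val) : triClass (hexVel k) = 2 := by
  revert h; fin_cases k <;> decide

lemma MR_odd (k : ZMod 6) (hk : Odd k.val) (σ : ℤ) (hσ : σ = 1 ∨ σ = -1) :
    hexM k (-σ) = hexR k σ := by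
  rcases hσ with rfl | rfl <;> revert hk <;> revert k <;> decide

lemma MR_even (k : ZMod 6) (hk : Even k.val) (σ : ℤ) (hσ : σ = 1 ∨ σ = -1) :
    hexM k σ = hexR k σ := by
  rcases hσ with rfl | rfl <;> revert hk <;> revert k <;> decide

lemma R_parity_odd (k : ZMod 6) (hk : Odd k.val) (σ : ℤ) (hσ : σ = 1 ∨ σ = -1) :
    Even (hexR k σ).val := by
  rcases hσ with rfl | rfl <;> revert hk <;> revert k <;> decide

lemma R_parity_even (k : ZMod 6) (hk : Even k.val) (σ : ℤ) (hσ : σ = 1 ∨ σ = -1) :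
    Odd (hexR k σ).val := by
  rcases hσ with rfl | rfl <;> revert hk <;> revert k <;> decide

lemma hexVel_add_three : ∀ k : ZMod 6, hexVel (k + 3) = -hexVel k := by decide

lemma even_add_three : ∀ {k : ZMod 6}, Odd k.val → Even (k + 3).val := by decide

lemma hexAdjO_class {p q : ℤ × ℤ} (h : hexGraphO.Adj p q) :
    (triClass p = 0 ∧ triClass q = 1) ∨ (triClass q = 0 ∧ triClass p = 1) := by
  rcases h with ⟨h0, k, hk, rfl⟩ | ⟨h0, k, hk, rfl⟩
  · exact Or.inl ⟨h0, by rw [triClass_add, h0, triClass_hexVel_even hk, zero_add]⟩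
  · exact Or.inr ⟨h0, by rw [triClass_add, h0, triClass_hexVel_even hk, zero_add]⟩

lemma walk_class : ∀ {u v : ℤ × ℤ} (w : hexGraphO.Walk u v),
    (triClass u = 0 ∨ triClass u = 1) →
    (triClass v = 0 ∨ triClass v = 1) ∧ (triClass u = triClass v ↔ Even w.length) := by
  intro u v w
  induction w with
  | nil => exact fun h => ⟨h, by simp⟩
  | cons h w ih =>
    intro _
    rcases hexAdjO_class h with ⟨h1, h2⟩ | ⟨h2, h1⟩ <;>
    · obtain ⟨hv, hiff⟩ := ih (by first | exact Or.inr h2 | exact Or.inl h2)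
      refine ⟨hv, ?_⟩
      rw [SimpleGraph.Walk.length_cons, Nat.even_add_one, ← hiff]
      rcases hv with h3 | h3 <;> rw [h1, h2, h3] <;> decide
  

lemma dist_class {p : ℤ × ℤ} (hr : hexGraphO.Reachable 0 p) :
    (triClass p = 0 → Even (hexDistO p)) ∧ (triClass p = 1 → Odd (hexDistO p)) := by
  obtain ⟨w, hw⟩ := hr.exists_walk_length_eq_dist
  obtain ⟨hv, hiff⟩ := walk_class w (Or.inl (by decide))
  have hd : hexDistO p = w.length := hw.symm
  constructor
  · intro hp
    rw [hd, ← hiff, hp]; decide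
  · intro hp
    rw [hd, ← Nat.not_even_iff_odd, ← hiff, hp]; decide

lemma hexWalk_succ (f : ZMod 6 → ℤ → ZMod 6) (s : HexState) (t : ℕ) :
    hexWalk f s (t + 1) = hexStep f (hexWalk f s t) :=
  Function.iterate_succ_apply' _ _ _

lemma hexStep_pos (f : ZMod 6 → ℤ → ZMod 6) (s : HexState) :
    (hexStep f s).pos = s.pos + hexVel (f s.vel (s.env s.pos)) := rfl

lemma hexStep_vel (f : ZMod 6 → ℤ → ZMod 6) (s : HexState) :
    (hexStep f s).vel = f s.vel (s.env s.pos) := rfl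

lemma hexStep_env (f : ZMod 6 → ℤ → ZMod 6) (s : HexState) :
    (hexStep f s).env = fun q => if q = s.pos then -s.env s.pos else s.env q := rfl

/-- Theorem 3b: if σ_M(p) = (-1)^{d(p)+1} σ_R(p) for every site
p of the hexagonal lattice (d = graph distance to the origin), then the
flipping mirror walk on σ_M and the flipping rotator walk on σ_R, both starting
at the origin with a velocity of odd index, have identical positions at all
times. -/
theorem hex_equivalence_odd (σM σR : ℤ × ℤ → ℤ) (hσ : ∀ p, σR p = 1 ∨ σR p = -1)
    (hrel : ∀ p : ℤ × ℤ, triClass p = 0 ∨ triClass p = 1 →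
      σM p = (-1) ^ (hexDistO p + 1) * σR p)
    (k₀ : ZMod 6) (hk : Odd k₀.val) (t : ℕ) :
    (hexWalk hexM ⟨0, k₀, σM⟩ t).pos = (hexWalk hexR ⟨0, k₀, σR⟩ t).pos := by
  suffices h : ∀ t : ℕ,
      (hexWalk hexM ⟨0, k₀, σM⟩ t).pos = (hexWalk hexR ⟨0, k₀, σR⟩ t).pos ∧
      (hexWalk hexM ⟨0, k₀, σM⟩ t).vel = (hexWalk hexR ⟨0, k₀, σR⟩ t).vel ∧
      (∀ q, (hexWalk hexR ⟨0, k₀, σR⟩ t).env q = 1 ∨ (hexWalk hexR ⟨0, k₀, σR⟩ t).env q = -1) ∧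
      (∀ q, triClass q = 0 ∨ triClass q = 1 →
        (hexWalk hexM ⟨0, k₀, σM⟩ t).env q
          = (-1) ^ (hexDistO q + 1) * (hexWalk hexR ⟨0, k₀, σR⟩ t).env q) ∧
      hexGraphO.Reachable 0 (hexWalk hexR ⟨0, k₀, σR⟩ t).pos ∧
      ((triClass (hexWalk hexR ⟨0, k₀, σR⟩ t).pos = 0 ∧
          Odd (hexWalk hexR ⟨0, k₀, σR⟩ t).vel.val) ∨
       (triClass (hexWalk hexR ⟨0, k₀, σR⟩ t).pos = 1 ∧
          Even (hexWalk hexR ⟨0, k₀, σR⟩ t).vel.val)) by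
    exact (h t).1
  intro t
  induction t with
  | zero => exact ⟨rfl, rfl, hσ, hrel, SimpleGraph.Reachable.refl 0, Or.inl ⟨rfl, hk⟩⟩
  | succ t ih =>
    obtain ⟨hpos, hvel, hpm, henv, hreach, hcls⟩ := ih
    set a := hexWalk hexM ⟨0, k₀, σM⟩ t with ha
    set b := hexWalk hexR ⟨0, k₀, σR⟩ t with hb
    simp only [hexWalk_succ, hexStep_pos, hexStep_vel, hexStep_env, ← ha, ← hb]
    rw [hpos, hvel]
    have hσp := hpm b.pos
    rcases hcls with ⟨hc0, hodd⟩ | ⟨hc1, heven⟩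
    · -- class 0, odd velocity
      have hd : Even (hexDistO b.pos) := (dist_class hreach).1 hc0
      have hε : ((-1 : ℤ)) ^ (hexDistO b.pos + 1) = -1 := (Even.add_one hd).neg_one_pow
      have haenv : a.env b.pos = -(b.env b.pos) := by
        rw [henv b.pos (Or.inl hc0), hε]; ring
      have hkM : hexM b.vel (a.env b.pos) = hexR b.vel (b.env b.pos) := by
        rw [haenv]; exact MR_odd _ hodd _ hσp
      have hk' : Even (hexR b.vel (b.env b.pos)).val := R_parity_odd _ hodd _ hσp
      have hadj : hexGraphO.Adj b.pos (b.pos + hexVel (hexR b.vel (b.env b.pos))) :=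
        Or.inl ⟨hc0, _, hk', rfl⟩
      refine ⟨by rw [hkM], by rw [hkM], ?_, ?_, hreach.trans hadj.reachable, ?_⟩
      · intro q
        split_ifs with hq
        · rcases hpm b.pos with h | h <;> simp [h]
        · exact hpm q
      · intro q hq
        split_ifs with hqp
        · rw [hqp, haenv, hε]; ring
        · exact henv q hq
      · refine Or.inr ⟨?_, hk'⟩
        rw [triClass_add, hc0, triClass_hexVel_even hk', zero_add]
    · -- class 1, even velocity
      have hd : Odd (hexDistO b.pos) := (dist_class hreach).2 hc1
      have hε : ((-1 : ℤ)) ^ (hexDistO b.pos + 1) = 1 := (Odd.add_one hd).neg_one_pow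
      have haenv : a.env b.pos = b.env b.pos := by
        rw [henv b.pos (Or.inr hc1), hε, one_mul]
      have hkM : hexM b.vel (a.env b.pos) = hexR b.vel (b.env b.pos) := by
        rw [haenv]; exact MR_even _ heven _ hσp
      have hk' : Odd (hexR b.vel (b.env b.pos)).val := R_parity_even _ heven _ hσp
      have hcls' : triClass (b.pos + hexVel (hexR b.vel (b.env b.pos))) = 0 := by
        rw [triClass_add, hc1, triClass_hexVel_odd hk']; decide
      have hadj : hexGraphO.Adj b.pos (b.pos + hexVel (hexR b.vel (b.env b.pos))) := by
        refine Or.inr ⟨hcls', hexR b.vel (b.env b.pos) + 3, even_add_three hk', ?_⟩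
        rw [hexVel_add_three]; abel
      refine ⟨by rw [hkM], by rw [hkM], ?_, ?_, hreach.trans hadj.reachable, ?_⟩
      · intro q
        split_ifs with hq
        · rcases hpm b.pos with h | h <;> simp [h]
        · exact hpm q
      · intro q hq
        split_ifs with hqp
        · rw [hqp, haenv, hε]; ring
        · exact henv q hq
      · exact Or.inl ⟨hcls', hk'⟩
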